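/- Existence of γ-normal forms in the λ^q-calculus: for every λ^q-term M there exists a λ^q-term N such that M ↠_γ N and N contains no γ-redexes; consequently (together with the Church-Rosser property of γ) every λ^q-term M has a unique γ-normal form γ(M). -/

import Mathlib

/-- Signs (phases) of the λ^q-calculus. -/
inductive Sign : Type
  | pos : Sign
  | neg : Sign
deriving DecidableEq

/-- λ^q-terms: M ::= Sx | M₁ M₂ | Sλx.M | (M₁, M₂), where S ∈ {+,−} is a
sign, over a countably infinite set of variables. -/
inductive QTerm : Type
  | var : Sign → ℕ → QTerm
  | app : QTerm → QTerm → QTerm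
  | lam : Sign → ℕ → QTerm → QTerm
  | coll : QTerm → QTerm → QTerm

/-- The congruence on λ^q-terms generated by (ClnOrd) M,N ≡ N,M and
(ClnNest) (M,N),P ≡ M,(N,P). -/
inductive CongQ : QTerm → QTerm → Prop
  | refl (M : QTerm) : CongQ M M
  | symm {M N : QTerm} : CongQ M N → CongQ N M
  | trans {M N P : QTerm} : CongQ M N → CongQ N P → CongQ M P
  | app {M M' N N' : QTerm} : CongQ M M' → CongQ N N' → CongQ (.app M N) (.app M' N')
  | lam (s : Sign) (x : ℕ) {M M' : QTerm} : CongQ M M' → CongQ (.lam s x M) (.lam s x M')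
  | coll {M M' N N' : QTerm} : CongQ M M' → CongQ N N' → CongQ (.coll M N) (.coll M' N')
  | ord (M N : QTerm) : CongQ (.coll M N) (.coll N M)
  | nest (M N P : QTerm) : CongQ (.coll (.coll M N) P) (.coll M (.coll N P))

/-- `collOf M [N₁,…,Nₖ]` is the right-associated collection `(M, N₁, …, Nₖ)`. -/
def collOf : QTerm → List QTerm → QTerm
  | M, [] => M
  | M, N :: L => .coll M (collOf N L)

/-- A term is a collection if its outermost constructor is the comma. -/
def IsColl : QTerm → Prop
  | .coll _ _ => True
  | _ => False

/-- The γ-relation of the λ^q-calculus: it relates each application P Q, where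
P is congruent to a collection (M₀,…,M_m) and Q to a collection (N₀,…,N_n)
with at least one of them a proper (more-than-one-element) collection, to the
collection of all applications M_i N_j. -/
inductive GammaQ : QTerm → QTerm → Prop
  | mk (P Q M N : QTerm) (Ms Ns : List QTerm)
      (hP : CongQ P (collOf M Ms)) (hQ : CongQ Q (collOf N Ns))
      (hn : Ms ≠ [] ∨ Ns ≠ []) :
      GammaQ (.app P Q)
        (collOf (.app M N)
          (Ns.map (.app M) ++ Ms.flatMap fun Mi => (N :: Ns).map (.app Mi)))

/-- One-step γ-reduction: the compatible closure of the γ-relation. -/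
inductive StepGQ : QTerm → QTerm → Prop
  | gamma {M N : QTerm} : GammaQ M N → StepGQ M N
  | appL {M M' N : QTerm} : StepGQ M M' → StepGQ (.app M N) (.app M' N)
  | appR {M N N' : QTerm} : StepGQ N N' → StepGQ (.app M N) (.app M N')
  | lam (s : Sign) (x : ℕ) {M M' : QTerm} : StepGQ M M' → StepGQ (.lam s x M) (.lam s x M')
  | collL {M M' N : QTerm} : StepGQ M M' → StepGQ (.coll M N) (.coll M' N)
  | collR {M N N' : QTerm} : StepGQ N N' → StepGQ (.coll M N) (.coll M N')

/-- γ-reduction ↠_γ : the reflexive-transitive closure of one-step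
γ-reduction, on terms considered up to the congruence generated by
(ClnOrd) and (ClnNest). -/
def RedGQ : QTerm → QTerm → Prop :=
  Relation.ReflTransGen (fun M N => StepGQ M N ∨ CongQ M N)

/-- A term is in γ-normal form if it contains no γ-redex. -/
def NoGammaRedexQ : QTerm → Prop
  | .var _ _ => True
  | .lam _ _ M => NoGammaRedexQ M
  | .app P Q => ¬ IsColl P ∧ ¬ IsColl Q ∧ NoGammaRedexQ P ∧ NoGammaRedexQ Q
  | .coll P Q => NoGammaRedexQ P ∧ NoGammaRedexQ Q

/- ======================= auxiliary development ======================= -/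

open List in
/-- Flattened list of top-level collection components. -/
def plist : QTerm → List QTerm
  | .coll a b => plist a ++ plist b
  | .var s x => [.var s x]
  | .app a b => [.app a b]
  | .lam s x a => [.lam s x a]

/-- Build a term from a nonempty list of components. -/
def mkl : List QTerm → QTerm
  | [] => .var .pos 0
  | h :: t => collOf h t

/-- All pairwise applications. -/
def prodl (p q : List QTerm) : List QTerm := p.flatMap fun a => q.map (.app a)

/-- The normalization function. -/
def nQ : QTerm → QTerm
  | .var s x => .var s x
  | .lam s x M => .lam s x (nQ M)
  | .coll M N => .coll (nQ M) (nQ N)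
  | .app M N => mkl (prodl (plist (nQ M)) (plist (nQ N)))

theorem plist_ne : ∀ t : QTerm, plist t ≠ []
  | .var _ _ => by simp [plist]
  | .app _ _ => by simp [plist]
  | .lam _ _ _ => by simp [plist]
  | .coll a b => by simp [plist, plist_ne a]

theorem plist_noColl : ∀ t : QTerm, ∀ u ∈ plist t, ¬ IsColl u
  | .var s x, u, hu => by simp [plist] at hu; subst hu; simp [IsColl]
  | .app a b, u, hu => by simp [plist] at hu; subst hu; simp [IsColl]
  | .lam s x a, u, hu => by simp [plist] at hu; subst hu; simp [IsColl]
  | .coll a b, u, hu => by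
      simp only [plist, List.mem_append] at hu
      rcases hu with h | h
      · exact plist_noColl a u h
      · exact plist_noColl b u h

theorem plist_normal : ∀ t : QTerm, NoGammaRedexQ t → ∀ u ∈ plist t, NoGammaRedexQ u
  | .var s x, ht, u, hu => by simp [plist] at hu; subst hu; exact ht
  | .app a b, ht, u, hu => by simp [plist] at hu; subst hu; exact ht
  | .lam s x a, ht, u, hu => by simp [plist] at hu; subst hu; exact ht
  | .coll a b, ht, u, hu => by
      simp only [plist, List.mem_append] at hu
      rcases hu with h | h
      · exact plist_normal a ht.1 u h
      · exact plist_normal b ht.2 u h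

theorem mkl_cons {t : List QTerm} (h : t ≠ []) (x : QTerm) :
    mkl (x :: t) = .coll x (mkl t) := by
  cases t with
  | nil => exact absurd rfl h
  | cons y r => rfl

theorem plist_eq_singleton {t x : QTerm} (h : plist t = [x]) : t = x := by
  cases t with
  | coll a b =>
      exfalso
      have h1 : 0 < (plist a).length := List.length_pos_iff.2 (plist_ne a)
      have h2 : 0 < (plist b).length := List.length_pos_iff.2 (plist_ne b)
      have := congrArg List.length h
      simp only [plist, List.length_append, List.length_singleton] at this
      omega
  | var s x' => simpa [plist] using h
  | app a b => simpa [plist] using h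
  | lam s x' a => simpa [plist] using h

theorem congq_coll_mkl_append :
    ∀ (l1 : List QTerm), l1 ≠ [] → ∀ (l2 : List QTerm), l2 ≠ [] →
      CongQ (.coll (mkl l1) (mkl l2)) (mkl (l1 ++ l2))
  | [], h, _, _ => absurd rfl h
  | [x], _, l2, h2 => by
      rw [show mkl [x] = x from rfl, List.singleton_append, mkl_cons h2]
      exact CongQ.refl _
  | x :: y :: r, _, l2, h2 => by
      have hne : (y :: r : List QTerm) ≠ [] := by simp
      rw [mkl_cons hne x, List.cons_append, mkl_cons (by simp : (y::r)++l2 ≠ [])]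
      exact CongQ.trans (CongQ.nest x (mkl (y :: r)) (mkl l2))
        (CongQ.coll (CongQ.refl x) (congq_coll_mkl_append (y :: r) hne l2 h2))

theorem congq_plist_self : ∀ t : QTerm, CongQ t (mkl (plist t))
  | .var s x => CongQ.refl _
  | .app a b => CongQ.refl _
  | .lam s x a => CongQ.refl _
  | .coll a b => by
      simp only [plist]
      exact CongQ.trans
        (CongQ.coll (congq_plist_self a) (congq_plist_self b))
        (congq_coll_mkl_append _ (plist_ne a) _ (plist_ne b))

theorem congq_mkl_perm {l l' : List QTerm} (h : l.Perm l') : CongQ (mkl l) (mkl l') := by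
  induction h with
  | nil => exact CongQ.refl _
  | cons x p ih =>
      rename_i t t'
      cases t with
      | nil => cases p.symm.eq_nil; exact CongQ.refl _
      | cons a r =>
          cases t' with
          | nil => exact absurd p.eq_nil (by simp)
          | cons b r' => exact CongQ.coll (CongQ.refl x) ih
  | swap x y l =>
      cases l with
      | nil => exact CongQ.ord y x
      | cons a r =>
          exact CongQ.trans (CongQ.symm (CongQ.nest y x (mkl (a :: r))))
            (CongQ.trans (CongQ.coll (CongQ.ord y x) (CongQ.refl _))
              (CongQ.nest x y (mkl (a :: r))))
  | trans p q ih1 ih2 => exact CongQ.trans ih1 ih2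

theorem congq_mkl_forall2 {l l' : List QTerm} (h : List.Forall₂ CongQ l l') :
    CongQ (mkl l) (mkl l') := by
  induction h with
  | nil => exact CongQ.refl _
  | cons hxy h ih =>
      rename_i x y t t'
      cases t with
      | nil => cases h; exact hxy
      | cons a r =>
          cases h with
          | cons hab h' => exact CongQ.coll hxy ih

/-- Permutation-up-to-congruence of component lists. -/
def LR (l l' : List QTerm) : Prop := ∃ m, l.Perm m ∧ List.Forall₂ CongQ m l'

theorem congq_mkl_LR {l l'} (h : LR l l') : CongQ (mkl l) (mkl l') := by
  obtain ⟨m, hp, hf⟩ := h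
  exact CongQ.trans (congq_mkl_perm hp) (congq_mkl_forall2 hf)

theorem LR.refl (l : List QTerm) : LR l l :=
  ⟨l, List.Perm.refl l, List.forall₂_same.2 fun x _ => CongQ.refl x⟩

theorem forall2_perm_commute :
    ∀ {b c : List QTerm}, b.Perm c → ∀ {a : List QTerm}, List.Forall₂ CongQ a b →
      ∃ d, a.Perm d ∧ List.Forall₂ CongQ d c := by
  intro b c hp
  induction hp with
  | nil => intro a ha; cases ha; exact ⟨[], List.Perm.nil, List.Forall₂.nil⟩
  | cons x p ih =>
      intro a ha
      cases ha with
      | cons hy ha' =>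
          obtain ⟨d', hp', hf'⟩ := ih ha'
          exact ⟨_ :: d', hp'.cons _, List.Forall₂.cons hy hf'⟩
  | swap x y l =>
      intro a ha
      cases ha with
      | cons hu ha' =>
          cases ha' with
          | cons hv ha'' =>
              exact ⟨_ :: _ :: _, List.Perm.swap _ _ _,
                List.Forall₂.cons hv (List.Forall₂.cons hu ha'')⟩
  | trans p q ih1 ih2 =>
      intro a ha
      obtain ⟨d1, hp1, hf1⟩ := ih1 ha
      obtain ⟨d2, hp2, hf2⟩ := ih2 hf1
      exact ⟨d2, hp1.trans hp2, hf2⟩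

theorem forall2_congq_trans :
    ∀ {a b c : List QTerm}, List.Forall₂ CongQ a b → List.Forall₂ CongQ b c →
      List.Forall₂ CongQ a c := by
  intro a b c hab
  induction hab generalizing c with
  | nil => intro h; cases h; exact List.Forall₂.nil
  | cons hxy h ih =>
      intro hbc
      cases hbc with
      | cons hyz h' => exact List.Forall₂.cons (CongQ.trans hxy hyz) (ih h')

theorem LR.trans {l m n : List QTerm} (h1 : LR l m) (h2 : LR m n) : LR l n := by
  obtain ⟨a, hp1, hf1⟩ := h1
  obtain ⟨b, hp2, hf2⟩ := h2
  obtain ⟨d, hpd, hfd⟩ := forall2_perm_commute hp2 hf1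
  exact ⟨d, hp1.trans hpd, forall2_congq_trans hfd hf2⟩

theorem LR.symm {l m : List QTerm} (h : LR l m) : LR m l := by
  obtain ⟨a, hp, hf⟩ := h
  have hf' : List.Forall₂ CongQ m a := List.Forall₂.flip (hf.imp fun _ _ h => CongQ.symm h)
  obtain ⟨d, hpd, hfd⟩ := forall2_perm_commute hp.symm hf'
  exact ⟨d, hpd, hfd⟩

theorem LR.append {l1 l2 m1 m2 : List QTerm} (h1 : LR l1 m1) (h2 : LR l2 m2) :
    LR (l1 ++ l2) (m1 ++ m2) := by
  obtain ⟨a, hp1, hf1⟩ := h1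
  obtain ⟨b, hp2, hf2⟩ := h2
  exact ⟨a ++ b, hp1.append hp2, List.rel_append hf1 hf2⟩

theorem LR.of_perm {l m : List QTerm} (h : l.Perm m) : LR l m :=
  ⟨m, h, List.forall₂_same.2 fun x _ => CongQ.refl x⟩

theorem LR.of_forall2 {l m : List QTerm} (h : List.Forall₂ CongQ l m) : LR l m :=
  ⟨l, List.Perm.refl l, h⟩

theorem cong_plist {A B : QTerm} (h : CongQ A B) : LR (plist A) (plist B) := by
  induction h with
  | refl M => exact LR.refl _
  | symm _ ih => exact ih.symm
  | trans _ _ ih1 ih2 => exact ih1.trans ih2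
  | app h1 h2 _ _ =>
      exact LR.of_forall2 (List.Forall₂.cons (CongQ.app h1 h2) List.Forall₂.nil)
  | lam s x h _ =>
      exact LR.of_forall2 (List.Forall₂.cons (CongQ.lam s x h) List.Forall₂.nil)
  | coll _ _ ih1 ih2 => exact ih1.append ih2
  | ord M N => exact LR.of_perm (List.perm_append_comm)
  | nest M N P => simp only [plist, List.append_assoc]; exact LR.refl _

theorem forall2_map_congq {q q' : List QTerm} (hq : List.Forall₂ CongQ q q')
    {a a' : QTerm} (ha : CongQ a a') :
    List.Forall₂ CongQ (q.map (.app a)) (q'.map (.app a')) := by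
  induction hq with
  | nil => exact List.Forall₂.nil
  | cons hxy h ih => exact List.Forall₂.cons (CongQ.app ha hxy) ih

theorem forall2_prodl {p p' q q' : List QTerm} (hp : List.Forall₂ CongQ p p')
    (hq : List.Forall₂ CongQ q q') :
    List.Forall₂ CongQ (prodl p q) (prodl p' q') := by
  induction hp with
  | nil => exact List.Forall₂.nil
  | cons hxy h ih => exact List.rel_append (forall2_map_congq hq hxy) ih

theorem perm_prodl {p p' q q' : List QTerm} (hp : p.Perm p') (hq : q.Perm q') :
    (prodl p q).Perm (prodl p' q') :=
  (hp.flatMap_right _).trans (List.Perm.flatMap_left _ fun a _ => hq.map _)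

theorem LR.prodl_congr {p p' q q' : List QTerm} (hp : LR p p') (hq : LR q q') :
    LR (prodl p q) (prodl p' q') := by
  obtain ⟨a, hp1, hf1⟩ := hp
  obtain ⟨b, hp2, hf2⟩ := hq
  exact ⟨prodl a b, perm_prodl hp1 hp2, forall2_prodl hf1 hf2⟩

theorem prodl_flatMap_left (l : List QTerm) (f : QTerm → List QTerm) (q : List QTerm) :
    prodl (l.flatMap f) q = l.flatMap fun a => prodl (f a) q := by
  simp [prodl, List.flatMap_assoc]

theorem prodl_append_right_perm (p q1 q2 : List QTerm) :
    (prodl p (q1 ++ q2)).Perm (prodl p q1 ++ prodl p q2) := by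
  unfold prodl
  refine List.Perm.symm ?_
  refine (List.flatMap_append_perm p (fun a => q1.map (fun b => QTerm.app a b)) (fun a => q2.map (fun b => QTerm.app a b))).trans ?_
  apply List.Perm.flatMap_left
  intro a _
  simp

theorem prodl_flatMap_right_perm (p : List QTerm) (l : List QTerm)
    (g : QTerm → List QTerm) :
    (prodl p (l.flatMap g)).Perm (l.flatMap fun b => prodl p (g b)) := by
  induction l with
  | nil => simp [prodl]
  | cons b t ih =>
      rw [List.flatMap_cons, List.flatMap_cons]
      exact (prodl_append_right_perm p (g b) (t.flatMap g)).trans (ih.append_left _)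

theorem cong_norm {A B : QTerm} (h : CongQ A B) : CongQ (nQ A) (nQ B) := by
  induction h with
  | refl M => exact CongQ.refl _
  | symm _ ih => exact CongQ.symm ih
  | trans _ _ ih1 ih2 => exact CongQ.trans ih1 ih2
  | app _ _ ih1 ih2 =>
      exact congq_mkl_LR ((cong_plist ih1).prodl_congr (cong_plist ih2))
  | lam s x _ ih => exact CongQ.lam s x ih
  | coll _ _ ih1 ih2 => exact CongQ.coll ih1 ih2
  | ord M N => exact CongQ.ord _ _
  | nest M N P => exact CongQ.nest _ _ _

theorem prodl_ne {p q : List QTerm} (hp : p ≠ []) (hq : q ≠ []) : prodl p q ≠ [] := by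
  cases p with
  | nil => exact absurd rfl hp
  | cons a t =>
      cases q with
      | nil => exact absurd rfl hq
      | cons b r => simp [prodl]

theorem prodl_noColl {p q : List QTerm} : ∀ u ∈ prodl p q, ¬ IsColl u := by
  intro u hu
  simp only [prodl, List.mem_flatMap, List.mem_map] at hu
  obtain ⟨a, _, b, _, rfl⟩ := hu
  simp [IsColl]

theorem plist_mkl : ∀ {l : List QTerm}, l ≠ [] → (∀ u ∈ l, ¬ IsColl u) →
    plist (mkl l) = l
  | [], h, _ => absurd rfl h
  | [x], _, hc => by
      have := hc x (by simp)
      cases x <;> simp_all [plist, mkl, collOf, IsColl]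
  | x :: y :: r, _, hc => by
      rw [mkl_cons (by simp)]
      have hx := hc x (by simp)
      have hrest : plist (mkl (y :: r)) = y :: r :=
        plist_mkl (by simp) (fun u hu => hc u (by simp [hu]))
      have hpx : plist x = [x] := by cases x <;> simp_all [plist, IsColl]
      simp [plist, hpx, hrest]

theorem plist_collOf : ∀ (t : List QTerm) (h : QTerm),
    plist (collOf h t) = plist h ++ t.flatMap plist
  | [], h => by simp [collOf]
  | x :: r, h => by
      simp [collOf, plist, plist_collOf r x]

theorem norm_collOf : ∀ (t : List QTerm) (h : QTerm),
    nQ (collOf h t) = collOf (nQ h) (t.map nQ)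
  | [], h => rfl
  | x :: r, h => by simp [collOf, nQ, norm_collOf r x]

theorem plist_norm_collOf (t : List QTerm) (h : QTerm) :
    plist (nQ (collOf h t)) = (h :: t).flatMap fun u => plist (nQ u) := by
  rw [norm_collOf, plist_collOf]
  simp [List.flatMap_cons, List.flatMap_map, Function.comp]

theorem plist_norm_app (a b : QTerm) :
    plist (nQ (.app a b)) = prodl (plist (nQ a)) (plist (nQ b)) := by
  show plist (mkl (prodl (plist (nQ a)) (plist (nQ b)))) = _
  exact plist_mkl (prodl_ne (plist_ne _) (plist_ne _)) prodl_noColl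

theorem step_norm {A B : QTerm} (h : StepGQ A B) : CongQ (nQ A) (nQ B) := by
  induction h with
  | appL _ ih => exact congq_mkl_LR ((cong_plist ih).prodl_congr (LR.refl _))
  | appR _ ih => exact congq_mkl_LR ((LR.refl _).prodl_congr (cong_plist ih))
  | lam s x _ ih => exact CongQ.lam s x ih
  | collL _ ih => exact CongQ.coll ih (CongQ.refl _)
  | collR _ ih => exact CongQ.coll (CongQ.refl _) ih
  | gamma hg =>
      cases hg with
      | mk P Q M N Ms Ns hP hQ hn =>
          -- R is collOf (.app M N) rest = mkl (prodl (M::Ms) (N::Ns))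
          have hR : (collOf (.app M N)
              (Ns.map (.app M) ++ Ms.flatMap fun Mi => (N :: Ns).map (.app Mi)))
              = mkl (prodl (M :: Ms) (N :: Ns)) := by
            simp [prodl, mkl, List.flatMap_cons]
          rw [hR]
          set f : QTerm → List QTerm := fun u => plist (nQ u) with hf
          have s1 : LR (plist (nQ P)) ((M :: Ms).flatMap f) := by
            have := cong_plist (cong_norm hP)
            rwa [plist_norm_collOf] at this
          have s2 : LR (plist (nQ Q)) ((N :: Ns).flatMap f) := by
            have := cong_plist (cong_norm hQ)
            rwa [plist_norm_collOf] at this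
          have s3 : LR (prodl (plist (nQ P)) (plist (nQ Q)))
              (prodl ((M :: Ms).flatMap f) ((N :: Ns).flatMap f)) :=
            s1.prodl_congr s2
          have s4 : (prodl ((M :: Ms).flatMap f) ((N :: Ns).flatMap f)).Perm
              ((M :: Ms).flatMap fun a => (N :: Ns).flatMap fun b => prodl (f a) (f b)) := by
            rw [prodl_flatMap_left]
            exact List.Perm.flatMap_left _ fun a _ => prodl_flatMap_right_perm (f a) _ _
          have s5 : plist (nQ (mkl (prodl (M :: Ms) (N :: Ns))))
              = (M :: Ms).flatMap fun a => (N :: Ns).flatMap fun b => prodl (f a) (f b) := by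
            obtain ⟨h0, t0, hht⟩ : ∃ h0 t0, prodl (M :: Ms) (N :: Ns) = h0 :: t0 := by
              cases hpr : prodl (M :: Ms) (N :: Ns) with
              | nil => exact absurd hpr (prodl_ne (by simp) (by simp))
              | cons h0 t0 => exact ⟨h0, t0, rfl⟩
            rw [hht, show mkl (h0 :: t0) = collOf h0 t0 from rfl, plist_norm_collOf, ← hht]
            show (prodl (M :: Ms) (N :: Ns)).flatMap f = _
            unfold prodl
            rw [List.flatMap_assoc]
            apply List.flatMap_congr
            intro a _
            rw [List.flatMap_map]
            apply List.flatMap_congr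
            intro b _
            exact plist_norm_app a b
          show CongQ (mkl (prodl (plist (nQ P)) (plist (nQ Q)))) _
          refine CongQ.trans (congq_mkl_LR ?_)
            (CongQ.symm (congq_plist_self (nQ (mkl (prodl (M :: Ms) (N :: Ns))))))
          rw [s5]
          exact s3.trans (LR.of_perm s4)

theorem red_congnorm {A B : QTerm} (h : RedGQ A B) : CongQ (nQ A) (nQ B) := by
  induction h with
  | refl => exact CongQ.refl _
  | tail _ hstep ih =>
      rcases hstep with h' | h'
      · exact CongQ.trans ih (step_norm h')
      · exact CongQ.trans ih (cong_norm h')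

theorem norm_of_normal : ∀ {t : QTerm}, NoGammaRedexQ t → nQ t = t
  | .var s x, _ => rfl
  | .lam s x M, h => by
      have hM : NoGammaRedexQ M := h
      simp [nQ, norm_of_normal hM]
  | .coll M N, h => by simp [nQ, norm_of_normal h.1, norm_of_normal h.2]
  | .app P Q, h => by
      obtain ⟨hP, hQ, hnP, hnQ⟩ := h
      have e1 : nQ P = P := norm_of_normal hnP
      have e2 : nQ Q = Q := norm_of_normal hnQ
      have p1 : plist P = [P] := by cases P <;> simp_all [plist, IsColl]
      have p2 : plist Q = [Q] := by cases Q <;> simp_all [plist, IsColl]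
      simp [nQ, e1, e2, p1, p2, prodl, mkl, collOf]

theorem mkl_normal : ∀ {l : List QTerm}, (∀ u ∈ l, NoGammaRedexQ u) →
    NoGammaRedexQ (mkl l)
  | [], _ => trivial
  | [x], h => h x (by simp)
  | x :: y :: r, h => by
      rw [mkl_cons (by simp)]
      exact ⟨h x (by simp), mkl_normal fun u hu => h u (by simp [hu])⟩

theorem norm_normal : ∀ t : QTerm, NoGammaRedexQ (nQ t)
  | .var s x => trivial
  | .lam s x M => norm_normal M
  | .coll M N => ⟨norm_normal M, norm_normal N⟩
  | .app P Q => by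
      apply mkl_normal
      intro u hu
      simp only [prodl, List.mem_flatMap, List.mem_map] at hu
      obtain ⟨a, ha, b, hb, rfl⟩ := hu
      exact ⟨plist_noColl _ a ha, plist_noColl _ b hb,
        plist_normal _ (norm_normal P) a ha, plist_normal _ (norm_normal Q) b hb⟩

theorem red_app {P P' Q Q' : QTerm} (h1 : RedGQ P P') (h2 : RedGQ Q Q') :
    RedGQ (.app P Q) (.app P' Q') := by
  refine Relation.ReflTransGen.trans
    (Relation.ReflTransGen.lift (fun x => QTerm.app x Q) ?_ _ _ h1)
    (Relation.ReflTransGen.lift (fun x => QTerm.app P' x) ?_ _ _ h2)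
  · rintro a b (h | h)
    · exact Or.inl (StepGQ.appL h)
    · exact Or.inr (CongQ.app h (CongQ.refl _))
  · rintro a b (h | h)
    · exact Or.inl (StepGQ.appR h)
    · exact Or.inr (CongQ.app (CongQ.refl _) h)

theorem red_lam (s : Sign) (x : ℕ) {M M' : QTerm} (h : RedGQ M M') :
    RedGQ (.lam s x M) (.lam s x M') := by
  refine Relation.ReflTransGen.lift (fun t => QTerm.lam s x t) ?_ _ _ h
  rintro a b (h | h)
  · exact Or.inl (StepGQ.lam s x h)
  · exact Or.inr (CongQ.lam s x h)

theorem red_coll {P P' Q Q' : QTerm} (h1 : RedGQ P P') (h2 : RedGQ Q Q') :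
    RedGQ (.coll P Q) (.coll P' Q') := by
  refine Relation.ReflTransGen.trans
    (Relation.ReflTransGen.lift (fun x => QTerm.coll x Q) ?_ _ _ h1)
    (Relation.ReflTransGen.lift (fun x => QTerm.coll P' x) ?_ _ _ h2)
  · rintro a b (h | h)
    · exact Or.inl (StepGQ.collL h)
    · exact Or.inr (CongQ.coll h (CongQ.refl _))
  · rintro a b (h | h)
    · exact Or.inl (StepGQ.collR h)
    · exact Or.inr (CongQ.coll (CongQ.refl _) h)

theorem red_norm : ∀ t : QTerm, RedGQ t (nQ t)
  | .var s x => Relation.ReflTransGen.refl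
  | .lam s x M => red_lam s x (red_norm M)
  | .coll M N => red_coll (red_norm M) (red_norm N)
  | .app P Q => by
      have h1 : RedGQ (.app P Q) (.app (nQ P) (nQ Q)) :=
        red_app (red_norm P) (red_norm Q)
      refine h1.trans ?_
      obtain ⟨M0, Ms, hMs⟩ : ∃ h0 t0, plist (nQ P) = h0 :: t0 := by
        cases hp : plist (nQ P) with
        | nil => exact absurd hp (plist_ne _)
        | cons h0 t0 => exact ⟨h0, t0, rfl⟩
      obtain ⟨N0, Ns, hNs⟩ : ∃ h0 t0, plist (nQ Q) = h0 :: t0 := by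
        cases hp : plist (nQ Q) with
        | nil => exact absurd hp (plist_ne _)
        | cons h0 t0 => exact ⟨h0, t0, rfl⟩
      by_cases hd : Ms = [] ∧ Ns = []
      · obtain ⟨rfl, rfl⟩ := hd
        have e1 : nQ P = M0 := plist_eq_singleton hMs
        have e2 : nQ Q = N0 := plist_eq_singleton hNs
        have : nQ (.app P Q) = .app (nQ P) (nQ Q) := by
          show mkl (prodl (plist (nQ P)) (plist (nQ Q))) = _
          rw [hMs, hNs, e1, e2]
          rfl
        rw [this]
      · have hn : Ms ≠ [] ∨ Ns ≠ [] := by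
          by_contra hc
          push_neg at hc
          exact hd ⟨hc.1, hc.2⟩
        have hP : CongQ (nQ P) (collOf M0 Ms) := by
          have := congq_plist_self (nQ P)
          rwa [hMs] at this
        have hQ : CongQ (nQ Q) (collOf N0 Ns) := by
          have := congq_plist_self (nQ Q)
          rwa [hNs] at this
        have hstep : StepGQ (.app (nQ P) (nQ Q))
            (collOf (.app M0 N0)
              (Ns.map (.app M0) ++ Ms.flatMap fun Mi => (N0 :: Ns).map (.app Mi))) :=
          StepGQ.gamma (GammaQ.mk (nQ P) (nQ Q) M0 N0 Ms Ns hP hQ hn)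
        have hEq : nQ (.app P Q)
            = collOf (.app M0 N0)
              (Ns.map (.app M0) ++ Ms.flatMap fun Mi => (N0 :: Ns).map (.app Mi)) := by
          show mkl (prodl (plist (nQ P)) (plist (nQ Q))) = _
          rw [hMs, hNs]
          simp [prodl, mkl, List.flatMap_cons]
        rw [hEq]
        exact Relation.ReflTransGen.single (Or.inl hstep)

/-- Existence of γ-normal forms in the λ^q-calculus: every λ^q-term M
γ-reduces to some term N containing no γ-redexes; consequently (together
with the Church-Rosser property of γ) every λ^q-term has a unique γ-normal
form γ(M), unique up to the congruence. -/
theorem gammaQ_normal_form_exists (M : QTerm) :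
    ∃ N : QTerm, RedGQ M N ∧ NoGammaRedexQ N ∧
      ∀ N' : QTerm, RedGQ M N' → NoGammaRedexQ N' → CongQ N' N := by
  refine ⟨nQ M, red_norm M, norm_normal M, ?_⟩
  intro N' hred hnf
  have h1 : CongQ (nQ M) (nQ N') := red_congnorm hred
  rw [norm_of_normal hnf] at h1
  exact CongQ.symm h1
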